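/- Let ρ = (n, n−1, …, 1, 0) ∈ ℤ^{n+1} and let ν ∈ ℤ^{n+1}. Bott's algorithm applied to ν stops in the singular case (some consecutive difference ν_{l+1} − ν_l = 1 at the first ascent at some stage) if and only if ν + ρ has two equal entries; otherwise it terminates at the unique weakly decreasing sequence w(ν+ρ) − ρ, where w is the permutation sorting ν + ρ into strictly decreasing order, and the total number of swap steps equals the number of inversions of w. -/

import Mathlib

/-- The swap step of Bott's algorithm at position `l`:
replace `(ν l, ν (l+1))` by `(ν (l+1) - 1, ν l + 1)`. -/
def bottSwap (ν : ℕ → ℤ) (l : ℕ) : ℕ → ℤ :=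
  Function.update (Function.update ν l (ν (l + 1) - 1)) (l + 1) (ν l + 1)

/-- `l` is the first ascent of the sequence `ν` of length `n+1` (entries `ν 0,…,ν n`). -/
def FirstAscent (n : ℕ) (ν : ℕ → ℤ) (l : ℕ) : Prop :=
  l < n ∧ ν l < ν (l + 1) ∧ ∀ i < l, ν (i + 1) ≤ ν i

/-- One swap step of Bott's algorithm: at the first ascent `l`, the difference is
not `1`, and the entries at `l`, `l+1` are swapped in the dotted sense. -/
def IsBottStep (n : ℕ) (ν ν' : ℕ → ℤ) : Prop :=
  ∃ l, FirstAscent n ν l ∧ ν (l + 1) - ν l ≠ 1 ∧ ν' = bottSwap ν l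

/-- The sequence `ν 0, …, ν n` is weakly decreasing (Bott's algorithm stops with output). -/
def BottWeaklyDecr (n : ℕ) (ν : ℕ → ℤ) : Prop :=
  ∀ i < n, ν (i + 1) ≤ ν i

/-- Bott's algorithm stops in the singular case: the first ascent has difference `1`. -/
def BottSingular (n : ℕ) (ν : ℕ → ℤ) : Prop :=
  ∃ l, FirstAscent n ν l ∧ ν (l + 1) - ν l = 1

/-- A terminal state of Bott's algorithm. -/
def BottTerminal (n : ℕ) (ν : ℕ → ℤ) : Prop :=
  BottWeaklyDecr n ν ∨ BottSingular n ν

/-- The number of inversions (Coxeter length) of a permutation of `Fin (n+1)`. -/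
def invCount (n : ℕ) (w : Equiv.Perm (Fin (n + 1))) : ℕ :=
  (Finset.univ.filter fun p : Fin (n + 1) × Fin (n + 1) =>
    p.1 < p.2 ∧ w p.2 < w p.1).card

namespace BottAux

/-- `μ i = ν i + (n - i)`. -/
def mu (n : ℕ) (ν : ℕ → ℤ) (i : ℕ) : ℤ := ν i + ((n : ℤ) - (i : ℤ))

/-- The set of "non-inversions" of `μ` restricted to `{0,…,n}`. -/
def S (n : ℕ) (ν : ℕ → ℤ) : Finset (Fin (n + 1) × Fin (n + 1)) :=
  Finset.univ.filter fun p => p.1 < p.2 ∧ mu n ν (p.1 : ℕ) ≤ mu n ν (p.2 : ℕ)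

def N (n : ℕ) (ν : ℕ → ℤ) : ℕ := (S n ν).card

lemma mem_S {n : ℕ} {ν : ℕ → ℤ} {p : Fin (n+1) × Fin (n+1)} :
    p ∈ S n ν ↔ p.1 < p.2 ∧ mu n ν (p.1 : ℕ) ≤ mu n ν (p.2 : ℕ) := by
  simp [S]

lemma mu_bottSwap (n : ℕ) (ν : ℕ → ℤ) (l : ℕ) :
    mu n (bottSwap ν l) l = mu n ν (l + 1) ∧
    mu n (bottSwap ν l) (l + 1) = mu n ν l ∧
    ∀ i, i ≠ l → i ≠ l + 1 → mu n (bottSwap ν l) i = mu n ν i := by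
  refine ⟨?_, ?_, fun i h1 h2 => ?_⟩
  · simp [mu, bottSwap, Function.update_apply]
    push_cast; ring
  · simp [mu, bottSwap, Function.update_apply]
    push_cast; ring
  · simp [mu, bottSwap, Function.update_apply, h1, h2]

lemma mu_fin_swap {n : ℕ} (ν : ℕ → ℤ) {l : ℕ} (hl : l < n) (p : Fin (n + 1)) :
    mu n (bottSwap ν l) (p : ℕ) =
      mu n ν ((Equiv.swap (⟨l, by omega⟩ : Fin (n+1)) ⟨l+1, by omega⟩ p : Fin (n+1)) : ℕ) := by
  obtain ⟨h1, h2, h3⟩ := mu_bottSwap n ν l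
  by_cases e1 : p = ⟨l, by omega⟩
  · subst e1; rw [Equiv.swap_apply_left]; exact h1
  by_cases e2 : p = ⟨l+1, by omega⟩
  · subst e2; rw [Equiv.swap_apply_right]; exact h2
  · rw [Equiv.swap_apply_of_ne_of_ne e1 e2]
    exact h3 _ (fun h => e1 (Fin.ext h)) (fun h => e2 (Fin.ext h))

/-- An adjacent swap preserves strict order of positions, except on the unique pair. -/
lemma swap_lt {n : ℕ} {l : ℕ} (hl : l < n) {a b : Fin (n + 1)} (hab : a < b)
    (hne : ¬((a : ℕ) = l ∧ (b : ℕ) = l + 1)) :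
    Equiv.swap (⟨l, by omega⟩ : Fin (n+1)) ⟨l+1, by omega⟩ a <
      Equiv.swap (⟨l, by omega⟩ : Fin (n+1)) ⟨l+1, by omega⟩ b := by
  have key : ∀ x : Fin (n+1),
      ((Equiv.swap (⟨l, by omega⟩ : Fin (n+1)) ⟨l+1, by omega⟩ x : Fin (n+1)) : ℕ) =
        if (x : ℕ) = l then l + 1 else if (x : ℕ) = l + 1 then l else x := by
    intro x
    by_cases e1 : x = ⟨l, by omega⟩
    · subst e1; rw [Equiv.swap_apply_left]; simp
    by_cases e2 : x = ⟨l+1, by omega⟩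
    · subst e2; rw [Equiv.swap_apply_right]; simp
    · rw [Equiv.swap_apply_of_ne_of_ne e1 e2]
      rw [if_neg (fun h => e1 (Fin.ext h)), if_neg (fun h => e2 (Fin.ext h))]
  rw [Fin.lt_def, key a, key b]
  rw [Fin.lt_def] at hab
  have hb := b.isLt
  split_ifs <;> omega

/-- the key step lemma: a Bott swap at an ascent position decreases `N` by one. -/
lemma N_step {n : ℕ} {ν : ℕ → ℤ} {l : ℕ} (hl : l < n)
    (hlt : mu n ν l < mu n ν (l + 1)) :
    N n (bottSwap ν l) + 1 = N n ν := by
  set lf : Fin (n+1) := ⟨l, by omega⟩ with hlf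
  set lf1 : Fin (n+1) := ⟨l+1, by omega⟩ with hlf1
  set τ : Equiv.Perm (Fin (n+1)) := Equiv.swap lf lf1 with hτ
  set m : Fin (n+1) × Fin (n+1) → Fin (n+1) × Fin (n+1) := fun p => (τ p.1, τ p.2) with hm
  have hmm : ∀ p, m (m p) = p := by
    intro p; simp [hm, hτ, Equiv.swap_apply_self]
  have hSS : S n (bottSwap ν l) = ((S n ν).erase (lf, lf1)).image m := by
    ext p
    constructor
    · intro hp
      rw [mem_S] at hp
      obtain ⟨h12, hle⟩ := hp
      have hpne : ¬((p.1 : ℕ) = l ∧ (p.2 : ℕ) = l + 1) := by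
        rintro ⟨e1, e2⟩
        have : mu n ν (l+1) ≤ mu n ν l := by
          have := hle
          rwa [e1, e2, (mu_bottSwap n ν l).1, (mu_bottSwap n ν l).2.1] at this
        omega
      refine Finset.mem_image.2 ⟨m p, ?_, hmm p⟩
      rw [Finset.mem_erase]
      constructor
      · intro h
        have h1 : τ p.1 = lf := congrArg Prod.fst h
        have h2 : τ p.2 = lf1 := congrArg Prod.snd h
        rw [Equiv.swap_apply_eq_iff] at h1 h2
        simp only [Equiv.swap_apply_left, Equiv.swap_apply_right, hτ] at h1 h2
        rw [h1, h2] at h12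
        exact absurd h12 (by simp [hlf, hlf1, Fin.lt_def])
      · rw [mem_S]
        refine ⟨swap_lt hl h12 hpne, ?_⟩
        have e1 := mu_fin_swap ν hl p.1
        have e2 := mu_fin_swap ν hl p.2
        rw [e1, e2] at hle
        exact hle
    · intro hp
      obtain ⟨q, hq, hqp⟩ := Finset.mem_image.1 hp
      rw [Finset.mem_erase, mem_S] at hq
      obtain ⟨hqne, hq12, hqle⟩ := hq
      have hqne' : ¬((q.1 : ℕ) = l ∧ (q.2 : ℕ) = l + 1) := by
        rintro ⟨e1, e2⟩
        exact hqne (Prod.ext (Fin.ext e1) (Fin.ext e2))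
      rw [mem_S, ← hqp]
      refine ⟨swap_lt hl hq12 hqne', ?_⟩
      have e1 := mu_fin_swap ν hl (τ q.1)
      have e2 := mu_fin_swap ν hl (τ q.2)
      simp only [hτ, Equiv.swap_apply_self] at e1 e2
      rw [hm]
      rw [e1, e2]
      simp only [hlf, hlf1, Equiv.swap_apply_self]
      exact hqle
  have hmem : (lf, lf1) ∈ S n ν := by
    rw [mem_S]
    exact ⟨by simp [hlf, hlf1, Fin.lt_def], le_of_lt hlt⟩
  have hinj : Function.Injective m := Function.LeftInverse.injective hmm
  rw [N, N, hSS, Finset.card_image_of_injective _ hinj,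
    Finset.card_erase_of_mem hmem]
  have : 0 < (S n ν).card := Finset.card_pos.2 ⟨_, hmem⟩
  omega

/-- translation: weakly decreasing `ν` means strictly decreasing `μ` stepwise. -/
lemma wd_iff {n : ℕ} {ν : ℕ → ℤ} :
    BottWeaklyDecr n ν ↔ ∀ i < n, mu n ν (i + 1) < mu n ν i := by
  unfold BottWeaklyDecr mu
  constructor <;> intro h i hi <;> have := h i hi <;> push_cast <;> push_cast at this <;> omega

/-- chained strict decrease on `Fin`. -/
lemma mu_strictAnti {n : ℕ} {ν : ℕ → ℤ} (h : BottWeaklyDecr n ν) :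
    ∀ a b : Fin (n + 1), a < b → mu n ν (b : ℕ) < mu n ν (a : ℕ) := by
  rw [wd_iff] at h
  have key : ∀ d a, a + d ≤ n → 0 < d → mu n ν (a + d) < mu n ν a := by
    intro d
    induction d with
    | zero => omega
    | succ d ih =>
      intro a ha _
      rcases Nat.eq_zero_or_pos d with hd | hd
      · subst hd; exact h a (by omega)
      · have h1 := ih a (by omega) hd
        have h2 := h (a + d) (by omega)
        have : a + d + 1 = a + (d+1) := by ring
        rw [this] at h2
        omega
  intro a b hab
  have hb := b.isLt
  have : (b : ℕ) = a + ((b : ℕ) - a) := by rw [Fin.lt_def] at hab; omega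
  rw [this]
  exact key _ _ (by omega) (by rw [Fin.lt_def] at hab; omega)

lemma N_eq_zero_iff {n : ℕ} {ν : ℕ → ℤ} : N n ν = 0 ↔ BottWeaklyDecr n ν := by
  constructor
  · intro h
    by_contra hwd
    unfold BottWeaklyDecr at hwd
    push_neg at hwd
    obtain ⟨i, hi, hasc⟩ := hwd
    have : (⟨i, by omega⟩, (⟨i+1, by omega⟩ : Fin (n+1))) ∈ S n ν := by
      rw [mem_S]
      refine ⟨by simp [Fin.lt_def], ?_⟩
      simp only [mu]
      push_cast
      omega
    have := Finset.card_pos.2 ⟨_, this⟩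
    rw [N] at h; omega
  · intro h
    rw [N, Finset.card_eq_zero]
    ext p
    simp only [Finset.notMem_empty, iff_false, mem_S]
    rintro ⟨h12, hle⟩
    exact absurd hle (not_le.2 (mu_strictAnti h _ _ h12))

lemma firstAscent_exists {n : ℕ} {ν : ℕ → ℤ} (h : ¬BottWeaklyDecr n ν) :
    ∃ l, FirstAscent n ν l := by
  unfold BottWeaklyDecr at h
  push_neg at h
  obtain ⟨i, hi, hasc⟩ := h
  have hex : ∃ l, l < n ∧ ν l < ν (l + 1) := ⟨i, hi, by omega⟩
  classical
  have hfn := (Nat.find_spec hex).1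
  refine ⟨Nat.find hex, hfn, (Nat.find_spec hex).2, fun j hj => ?_⟩
  have := Nat.find_min hex hj
  push_neg at this
  by_contra hc
  push_neg at hc
  have := this (by omega)
  omega

lemma firstAscent_mu_lt {n : ℕ} {ν : ℕ → ℤ} {l : ℕ} (h : FirstAscent n ν l)
    (hne : ν (l + 1) - ν l ≠ 1) : mu n ν l < mu n ν (l + 1) := by
  obtain ⟨hl, hasc, _⟩ := h
  simp only [mu]
  push_cast
  omega

lemma singular_mu_eq {n : ℕ} {ν : ℕ → ℤ} {l : ℕ} (hl : l < n)
    (heq : ν (l + 1) - ν l = 1) : mu n ν l = mu n ν (l + 1) := by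
  simp only [mu]; push_cast; omega

/-- deterministic next step of Bott's algorithm. -/
noncomputable def next (n : ℕ) (ν : ℕ → ℤ) : ℕ → ℤ :=
  @dite _ (∃ l, FirstAscent n ν l ∧ ν (l + 1) - ν l ≠ 1) (Classical.propDecidable _)
    (fun h => bottSwap ν h.choose) (fun _ => ν)

lemma next_isStep {n : ℕ} {ν : ℕ → ℤ}
    (h : ∃ l, FirstAscent n ν l ∧ ν (l + 1) - ν l ≠ 1) : IsBottStep n ν (next n ν) := by
  refine ⟨h.choose, h.choose_spec.1, h.choose_spec.2, ?_⟩
  unfold next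
  rw [dif_pos h]

/-- any Bott step transforms μ by an adjacent `Fin`-swap and decreases N by 1. -/
lemma step_props {n : ℕ} {ν ν' : ℕ → ℤ} (h : IsBottStep n ν ν') :
    (∃ σ : Equiv.Perm (Fin (n + 1)), ∀ p : Fin (n + 1),
       mu n ν' (p : ℕ) = mu n ν ((σ p : Fin (n+1)) : ℕ)) ∧
    N n ν' + 1 = N n ν := by
  obtain ⟨l, hfa, hne, hsw⟩ := h
  have hl := hfa.1
  have hlt := firstAscent_mu_lt hfa hne
  subst hsw
  exact ⟨⟨Equiv.swap ⟨l, by omega⟩ ⟨l+1, by omega⟩, fun p => mu_fin_swap ν hl p⟩,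
    N_step hl hlt⟩

lemma not_wd_of_eq {n : ℕ} {ν : ℕ → ℤ}
    (h : ∃ i j, i < j ∧ j ≤ n ∧ mu n ν i = mu n ν j) : ¬BottWeaklyDecr n ν := by
  obtain ⟨i, j, hij, hj, he⟩ := h
  intro hwd
  have := mu_strictAnti hwd ⟨i, by omega⟩ ⟨j, by omega⟩ (by simp [Fin.lt_def]; omega)
  simp only [Fin.val_mk] at this
  omega

lemma iterate_good {n : ℕ} {ν : ℕ → ℤ}
    (hdist : ∀ p q : Fin (n+1), mu n ν (p : ℕ) = mu n ν (q : ℕ) → p = q) :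
    ∀ k, k ≤ N n ν →
      (∀ i < k, IsBottStep n ((next n)^[i] ν) ((next n)^[i+1] ν)) ∧
      N n ((next n)^[k] ν) + k = N n ν ∧
      (∃ σ : Equiv.Perm (Fin (n + 1)), ∀ p : Fin (n+1),
        mu n ((next n)^[k] ν) (p : ℕ) = mu n ν ((σ p : Fin (n+1)) : ℕ)) := by
  intro k
  induction k with
  | zero => intro _; exact ⟨by omega, by simp, ⟨1, by simp⟩⟩
  | succ k ih =>
    intro hk
    obtain ⟨hsteps, hN, σ, hσ⟩ := ih (by omega)
    have hNpos : N n ((next n)^[k] ν) ≠ 0 := by omega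
    have hnwd : ¬BottWeaklyDecr n ((next n)^[k] ν) := fun h => hNpos (N_eq_zero_iff.2 h)
    obtain ⟨l, hfa⟩ := firstAscent_exists hnwd
    have hl := hfa.1
    have hne : ((next n)^[k] ν) (l + 1) - ((next n)^[k] ν) l ≠ 1 := by
      intro heq
      have hmu := singular_mu_eq hl heq
      have hlf : l < n + 1 := by omega
      have hlf1 : l + 1 < n + 1 := by omega
      have h1 := hσ ⟨l, hlf⟩
      have h2 := hσ ⟨l + 1, hlf1⟩
      simp only [Fin.val_mk] at h1 h2
      have heq2 : σ ⟨l, hlf⟩ = σ ⟨l + 1, hlf1⟩ :=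
        hdist _ _ (by rw [← h1, ← h2]; exact hmu)
      have := σ.injective heq2
      simp [Fin.ext_iff] at this
    have hex : ∃ l, FirstAscent n ((next n)^[k] ν) l ∧
        ((next n)^[k] ν) (l + 1) - ((next n)^[k] ν) l ≠ 1 := ⟨l, hfa, hne⟩
    have hstep : IsBottStep n ((next n)^[k] ν) ((next n)^[k+1] ν) := by
      rw [Function.iterate_succ_apply']
      exact next_isStep hex
    obtain ⟨⟨σ', hσ'⟩, hNdec⟩ := step_props hstep
    refine ⟨?_, by omega, ⟨σ'.trans σ, fun p => by rw [hσ' p]; exact hσ _⟩⟩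
    intro i hi
    rcases Nat.lt_or_ge i k with h | h
    · exact hsteps i h
    · have : i = k := by omega
      subst this; exact hstep

lemma reach_singular {n : ℕ} : ∀ N₀ (ν : ℕ → ℤ), N n ν ≤ N₀ →
    (∃ i j, i < j ∧ j ≤ n ∧ mu n ν i = mu n ν j) →
    ∃ k, ∃ f : ℕ → (ℕ → ℤ), f 0 = ν ∧ (∀ i < k, IsBottStep n (f i) (f (i + 1))) ∧
      BottSingular n (f k) := by
  intro N₀
  induction N₀ with
  | zero =>
    intro ν hN heq
    exact absurd (N_eq_zero_iff.1 (by omega)) (not_wd_of_eq heq)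
  | succ N₀ ih =>
    intro ν hN heq
    have hnwd := not_wd_of_eq heq
    obtain ⟨l, hfa⟩ := firstAscent_exists hnwd
    by_cases hd : ν (l + 1) - ν l = 1
    · exact ⟨0, fun _ => ν, rfl, by omega, ⟨l, hfa, hd⟩⟩
    · have hex : ∃ l, FirstAscent n ν l ∧ ν (l + 1) - ν l ≠ 1 := ⟨l, hfa, hd⟩
      have hstep : IsBottStep n ν (next n ν) := next_isStep hex
      obtain ⟨⟨σ, hσ⟩, hNdec⟩ := step_props hstep
      have heq' : ∃ i j, i < j ∧ j ≤ n ∧ mu n (next n ν) i = mu n (next n ν) j := by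
        obtain ⟨i, j, hij, hj, he⟩ := heq
        set a := σ⁻¹ ⟨i, by omega⟩ with ha
        set b := σ⁻¹ ⟨j, by omega⟩ with hb
        have h1 : mu n (next n ν) (a : ℕ) = mu n ν i := by
          rw [hσ a]; simp [ha]
        have h2 : mu n (next n ν) (b : ℕ) = mu n ν j := by
          rw [hσ b]; simp [hb]
        have hab : (a : ℕ) ≠ (b : ℕ) := by
          intro hc
          have : a = b := Fin.ext hc
          rw [ha, hb] at this
          have := σ⁻¹.injective this
          simp [Fin.ext_iff] at this
          omega
        rcases Nat.lt_or_ge (a : ℕ) (b : ℕ) with hlt | hge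
        · exact ⟨a, b, hlt, by omega, by rw [h1, h2, he]⟩
        · exact ⟨b, a, by omega, by omega, by rw [h1, h2, he]⟩
      obtain ⟨k, f, hf0, hsteps, hsing⟩ := ih (next n ν) (by omega) heq'
      refine ⟨k + 1, fun m => if m = 0 then ν else f (m - 1), rfl, ?_, by simpa using hsing⟩
      intro i hi
      rcases Nat.eq_zero_or_pos i with h0 | h0
      · subst h0; simpa [hf0] using hstep
      · have e1 : i ≠ 0 := by omega
        have e2 : i + 1 ≠ 0 := by omega
        simp only [e1, e2, if_false]
        have : i + 1 - 1 = i - 1 + 1 := by omega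
        rw [this]
        exact hsteps (i - 1) (by omega)

lemma N_eq_invCount {n : ℕ} {ν : ℕ → ℤ} (w : Equiv.Perm (Fin (n+1)))
    (hw : ∀ i j : Fin (n+1), i < j → mu n ν ((w j : Fin (n+1)) : ℕ) < mu n ν ((w i : Fin (n+1)) : ℕ)) :
    N n ν = invCount n w := by
  have hlt : ∀ a b : Fin (n+1), w⁻¹ b < w⁻¹ a → mu n ν (a : ℕ) < mu n ν (b : ℕ) := by
    intro a b h
    have := hw _ _ h
    simpa using this
  have hlt' : ∀ a b : Fin (n+1), mu n ν (a : ℕ) < mu n ν (b : ℕ) → w⁻¹ b < w⁻¹ a := by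
    intro a b h
    rcases lt_trichotomy (w⁻¹ b) (w⁻¹ a) with hc | hc | hc
    · exact hc
    · rw [(w⁻¹).injective.eq_iff.1 hc] at h; omega
    · have := hlt b a hc; omega
  have hne : ∀ a b : Fin (n+1), a ≠ b → mu n ν (a : ℕ) ≠ mu n ν (b : ℕ) := by
    intro a b hab hc
    rcases lt_trichotomy (w⁻¹ a) (w⁻¹ b) with h | h | h
    · have := hlt b a h; omega
    · exact hab ((w⁻¹).injective h)
    · have := hlt a b h; omega
  unfold N invCount
  refine Finset.card_bij' (fun p _ => (w⁻¹ p.2, w⁻¹ p.1)) (fun p _ => (w p.2, w p.1))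
    ?_ ?_ ?_ ?_
  · intro p hp
    rw [mem_S] at hp
    obtain ⟨h12, hle⟩ := hp
    have hstr : mu n ν (p.1 : ℕ) < mu n ν (p.2 : ℕ) :=
      lt_of_le_of_ne hle (hne _ _ (ne_of_lt h12))
    simp only [Finset.mem_filter, Finset.mem_univ, true_and]
    exact ⟨hlt' _ _ hstr, by simpa using h12⟩
  · intro p hp
    simp only [Finset.mem_filter, Finset.mem_univ, true_and] at hp
    obtain ⟨h12, hinv⟩ := hp
    rw [mem_S]
    exact ⟨hinv, le_of_lt (hw _ _ h12)⟩
  · intro p _; simp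
  · intro p _; simp

lemma perm_strictMono_eq {m : ℕ} (σ : Equiv.Perm (Fin m)) (h : StrictMono σ) :
    ∀ i, σ i = i := by
  have : ⇑σ = id :=
    (StrictMono.range_inj h strictMono_id).1 (by rw [Equiv.range_eq_univ]; simp)
  intro i; rw [this]; rfl

end BottAux

open BottAux in
/-- with `ρ = (n, n−1, …, 0)` and `μ = ν + ρ`, Bott's algorithm stops in
the singular case iff `μ` has two equal entries; and if `w` sorts `μ` into strictly
decreasing order, the algorithm ends, after exactly `inv(w)` swap steps, at the
weakly decreasing sequence `w(ν+ρ) − ρ`. -/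
theorem bott_dotted_action (n : ℕ) (ν : ℕ → ℤ) :
    letI ρ : ℕ → ℤ := fun i => (n : ℤ) - (i : ℤ)
    letI μ : ℕ → ℤ := fun i => ν i + ρ i
    ((∃ k, ∃ f : ℕ → (ℕ → ℤ), f 0 = ν ∧ (∀ i < k, IsBottStep n (f i) (f (i + 1))) ∧
        BottSingular n (f k)) ↔
      ∃ i j, i < j ∧ j ≤ n ∧ μ i = μ j) ∧
    (∀ w : Equiv.Perm (Fin (n + 1)),
      (∀ i j : Fin (n + 1), i < j → μ (w j : ℕ) < μ (w i : ℕ)) →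
      ∃ f : ℕ → (ℕ → ℤ), f 0 = ν ∧
        (∀ i < invCount n w, IsBottStep n (f i) (f (i + 1))) ∧
        BottWeaklyDecr n (f (invCount n w)) ∧
        ∀ i : Fin (n + 1), f (invCount n w) (i : ℕ) = μ (w i : ℕ) - ρ (i : ℕ)) := by
  have hμ : ∀ (ν' : ℕ → ℤ) (i : ℕ), ν' i + ((n : ℤ) - (i : ℤ)) = mu n ν' i := fun _ _ => rfl
  constructor
  · constructor
    · -- singular reachable → equal entries
      rintro ⟨k, f, hf0, hsteps, hsing⟩
      have inv : ∀ j ≤ k, ∃ σ : Equiv.Perm (Fin (n+1)), ∀ p : Fin (n+1),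
          mu n (f j) (p : ℕ) = mu n ν ((σ p : Fin (n+1)) : ℕ) := by
        intro j
        induction j with
        | zero => intro _; exact ⟨1, by simp [hf0]⟩
        | succ j ihj =>
          intro hj
          obtain ⟨σ, hσ⟩ := ihj (by omega)
          obtain ⟨⟨σ', hσ'⟩, _⟩ := step_props (hsteps j (by omega))
          exact ⟨σ'.trans σ, fun p => by rw [hσ' p]; exact hσ _⟩
      obtain ⟨σ, hσ⟩ := inv k le_rfl
      obtain ⟨l, hfa, heq⟩ := hsing
      have hl := hfa.1
      have hmu := singular_mu_eq hl heq
      have hlf : l < n + 1 := by omega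
      have hlf1 : l + 1 < n + 1 := by omega
      have h1 := hσ ⟨l, hlf⟩
      have h2 := hσ ⟨l + 1, hlf1⟩
      simp only [Fin.val_mk] at h1 h2
      set a := σ ⟨l, hlf⟩ with ha
      set b := σ ⟨l + 1, hlf1⟩ with hb
      have heqv : mu n ν (a : ℕ) = mu n ν (b : ℕ) := by rw [← h1, ← h2]; exact hmu
      have hab : (a : ℕ) ≠ (b : ℕ) := by
        intro hc
        have hcc : a = b := Fin.ext hc
        rw [ha, hb] at hcc
        have := σ.injective hcc
        simp [Fin.ext_iff] at this
      have hble := b.isLt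
      have hale := a.isLt
      rcases Nat.lt_or_ge (a : ℕ) (b : ℕ) with hlt | hge
      · exact ⟨a, b, hlt, by omega, heqv⟩
      · exact ⟨b, a, by omega, by omega, heqv.symm⟩
    · -- equal entries → singular reachable
      rintro ⟨i, j, hij, hj, he⟩
      exact reach_singular (N n ν) ν le_rfl ⟨i, j, hij, hj, he⟩
  · intro w hw
    have hw' : ∀ i j : Fin (n + 1), i < j →
        mu n ν ((w j : Fin (n+1)) : ℕ) < mu n ν ((w i : Fin (n+1)) : ℕ) := hw
    have hdist : ∀ p q : Fin (n+1), mu n ν (p : ℕ) = mu n ν (q : ℕ) → p = q := by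
      intro p q hpq
      by_contra hne
      rcases lt_trichotomy (w⁻¹ p) (w⁻¹ q) with h | h | h
      · have := hw' _ _ h; simp only [Equiv.Perm.coe_inv, Equiv.apply_symm_apply] at this; omega
      · exact hne ((w⁻¹).injective h)
      · have := hw' _ _ h; simp only [Equiv.Perm.coe_inv, Equiv.apply_symm_apply] at this; omega
    have hNw : N n ν = invCount n w := N_eq_invCount w hw'
    obtain ⟨hsteps, hN, σ, hσ⟩ := iterate_good hdist (N n ν) le_rfl
    have hwd : BottWeaklyDecr n ((next n)^[N n ν] ν) := N_eq_zero_iff.1 (by omega)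
    have hanti := mu_strictAnti hwd
    -- σ = w
    have hmono : StrictMono ⇑(σ.trans w⁻¹) := by
      intro p q hpq
      have h1 : mu n ν ((σ q : Fin (n+1)) : ℕ) < mu n ν ((σ p : Fin (n+1)) : ℕ) := by
        rw [← hσ p, ← hσ q]; exact hanti _ _ hpq
      simp only [Equiv.trans_apply]
      rcases lt_trichotomy (w⁻¹ (σ p)) (w⁻¹ (σ q)) with h | h | h
      · exact h
      · exfalso
        have : σ p = σ q := (w⁻¹).injective h
        rw [this] at h1; omega
      · exfalso
        have := hw' _ _ h
        simp only [Equiv.Perm.coe_inv, Equiv.apply_symm_apply] at this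
        omega
    have hσw : ∀ p, σ p = w p := by
      intro p
      have := perm_strictMono_eq _ hmono p
      simp only [Equiv.trans_apply] at this
      have := congrArg w this
      rwa [Equiv.Perm.coe_inv, Equiv.apply_symm_apply] at this
    refine ⟨fun i => (next n)^[i] ν, rfl, ?_, ?_, ?_⟩
    · rw [← hNw]; exact hsteps
    · rw [← hNw]; exact hwd
    · intro i
      rw [← hNw]
      have h2 := hσ i
      rw [hσw i] at h2
      simp only [mu] at h2
      beta_reduce
      omega
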